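/- The Lovász extension of a submodular function is convex on [0,1]^p. -/

import Mathlib

/-- The Lovász extension of `F : 2^[p] → ℝ`, defined via the sorted-coordinates formula:
sort coordinates of `x` in decreasing order `x_{j_1} ≥ … ≥ x_{j_p}` and set
`f(x) = Σ_i x_{j_i} (F({j_1,…,j_i}) − F({j_1,…,j_{i−1}}))`. -/
noncomputable def lovasz {p : ℕ} (F : Finset (Fin p) → ℝ) (x : Fin p → ℝ) : ℝ :=
  let σ := Tuple.sort (fun j => -x j)
  ∑ i : Fin p, x (σ i) * (F ((Finset.Iic i).image σ) - F ((Finset.Iio i).image σ))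

open Finset

namespace LovaszAux

variable {p : ℕ}

/-- The set `σ({0,…,n-1})`. -/
def Sset (σ : Equiv.Perm (Fin p)) (n : ℕ) : Finset (Fin p) :=
  (Finset.univ.filter (fun i : Fin p => (i : ℕ) < n)).image σ

lemma mem_Sset {σ : Equiv.Perm (Fin p)} {n : ℕ} {j : Fin p} :
    j ∈ Sset σ n ↔ ((σ⁻¹ j : Fin p) : ℕ) < n := by
  simp only [Sset, mem_image, mem_filter, mem_univ, true_and]
  constructor
  · rintro ⟨i, hi, rfl⟩; simpa using hi
  · intro h; exact ⟨σ⁻¹ j, h, by simp⟩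

lemma Sset_zero (σ : Equiv.Perm (Fin p)) : Sset σ 0 = ∅ := by
  ext j; simp [mem_Sset]

lemma Sset_of_ge (σ : Equiv.Perm (Fin p)) {n : ℕ} (h : p ≤ n) : Sset σ n = univ := by
  ext j; simp only [mem_Sset, mem_univ, iff_true]; exact lt_of_lt_of_le (σ⁻¹ j).2 h

lemma Sset_succ (σ : Equiv.Perm (Fin p)) {n : ℕ} (h : n < p) :
    Sset σ (n + 1) = insert (σ ⟨n, h⟩) (Sset σ n) := by
  ext j
  rw [mem_insert, mem_Sset, mem_Sset, Nat.lt_succ_iff_lt_or_eq]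
  constructor
  · rintro (h1 | h2)
    · exact Or.inr h1
    · have hσ : σ⁻¹ j = ⟨n, h⟩ := Fin.ext h2
      exact Or.inl (by rw [← hσ]; simp)
  · rintro (rfl | h2)
    · right; simp
    · exact Or.inl h2

lemma Sset_succ_eq_of_ge (σ : Equiv.Perm (Fin p)) {n : ℕ} (h : ¬ n < p) :
    Sset σ (n + 1) = Sset σ n := by
  rw [Sset_of_ge σ (not_lt.1 h), Sset_of_ge σ (le_trans (not_lt.1 h) (Nat.le_succ n))]

lemma not_mem_Sset_self (σ : Equiv.Perm (Fin p)) {n : ℕ} (h : n < p) :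
    σ ⟨n, h⟩ ∉ Sset σ n := by simp [mem_Sset]

lemma image_Iic (σ : Equiv.Perm (Fin p)) (i : Fin p) :
    (Finset.Iic i).image σ = Sset σ ((i : ℕ) + 1) := by
  unfold Sset
  congr 1
  ext j
  rw [Finset.mem_Iic, mem_filter, Nat.lt_succ_iff]
  simp only [mem_univ, true_and]
  exact Fin.le_def

lemma image_Iio (σ : Equiv.Perm (Fin p)) (i : Fin p) :
    (Finset.Iio i).image σ = Sset σ (i : ℕ) := by
  unfold Sset
  congr 1
  ext j
  rw [Finset.mem_Iio, mem_filter]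
  simp only [mem_univ, true_and]
  exact Fin.lt_def

variable (F : Finset (Fin p) → ℝ)

/-- Greedy weights associated to a permutation. -/
noncomputable def w (σ : Equiv.Perm (Fin p)) (j : Fin p) : ℝ :=
  F (Sset σ (((σ⁻¹ j : Fin p) : ℕ) + 1)) - F (Sset σ ((σ⁻¹ j : Fin p) : ℕ))

lemma w_apply (σ : Equiv.Perm (Fin p)) (i : Fin p) :
    w F σ (σ i) = F (Sset σ ((i : ℕ) + 1)) - F (Sset σ (i : ℕ)) := by
  simp [w]

/-- Key fact: the greedy vector lies in the submodular polytope. -/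
lemma sum_w_le (hsub : ∀ A B : Finset (Fin p), F (A ∩ B) + F (A ∪ B) ≤ F A + F B)
    (h0 : F ∅ = 0) (σ : Equiv.Perm (Fin p)) (A : Finset (Fin p)) :
    ∑ j ∈ A, w F σ j ≤ F A := by
  have key : ∀ n : ℕ, ∑ j ∈ A ∩ Sset σ n, w F σ j ≤ F (A ∩ Sset σ n) := by
    intro n
    induction n with
    | zero => simp [Sset_zero, h0]
    | succ n ih =>
      by_cases h : n < p
      · rw [Sset_succ σ h]
        set j0 := σ ⟨n, h⟩ with hj0
        by_cases hA : j0 ∈ A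
        · have hins : A ∩ insert j0 (Sset σ n) = insert j0 (A ∩ Sset σ n) := by
            ext j; simp only [mem_inter, mem_insert]
            constructor
            · rintro ⟨hj, rfl | hj2⟩
              · exact Or.inl rfl
              · exact Or.inr ⟨hj, hj2⟩
            · rintro (rfl | ⟨hj, hj2⟩)
              · exact ⟨hA, Or.inl rfl⟩
              · exact ⟨hj, Or.inr hj2⟩
          rw [hins]
          have hnm : j0 ∉ A ∩ Sset σ n := fun hc => not_mem_Sset_self σ h (mem_inter.1 hc).2
          rw [sum_insert hnm]
          have hw : w F σ j0 = F (Sset σ (n + 1)) - F (Sset σ n) := w_apply F σ ⟨n, h⟩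
          -- submodularity step
          have hsub' := hsub (insert j0 (A ∩ Sset σ n)) (Sset σ n)
          have hint : insert j0 (A ∩ Sset σ n) ∩ Sset σ n = A ∩ Sset σ n := by
            ext j; simp only [mem_inter, mem_insert]
            constructor
            · rintro ⟨rfl | ⟨hj, _⟩, hj2⟩
              · exact absurd hj2 (not_mem_Sset_self σ h)
              · exact ⟨hj, hj2⟩
            · rintro ⟨hj, hj2⟩; exact ⟨Or.inr ⟨hj, hj2⟩, hj2⟩
          have hun : insert j0 (A ∩ Sset σ n) ∪ Sset σ n = Sset σ (n + 1) := by
            rw [Sset_succ σ h, ← hj0, insert_union,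
              Finset.union_eq_right.mpr inter_subset_right]
          rw [hint, hun] at hsub'
          have : F (Sset σ (n+1)) - F (Sset σ n) + F (A ∩ Sset σ n)
              ≤ F (insert j0 (A ∩ Sset σ n)) := by linarith
          calc w F σ j0 + ∑ j ∈ A ∩ Sset σ n, w F σ j
              ≤ F (Sset σ (n+1)) - F (Sset σ n) + F (A ∩ Sset σ n) := by
                rw [hw]; linarith [ih]
            _ ≤ F (insert j0 (A ∩ Sset σ n)) := this
        · have : A ∩ insert j0 (Sset σ n) = A ∩ Sset σ n := by
            ext j; simp only [mem_inter, mem_insert]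
            constructor
            · rintro ⟨hj, rfl | hj2⟩
              · exact absurd hj hA
              · exact ⟨hj, hj2⟩
            · rintro ⟨hj, hj2⟩; exact ⟨hj, Or.inr hj2⟩
          rw [this]; exact ih
      · rw [Sset_succ_eq_of_ge σ h]; exact ih
  have := key p
  rwa [Sset_of_ge σ le_rfl, inter_univ] at this

/-- Marginal gains along a permutation, as an ℕ-indexed sequence. -/
noncomputable def c (σ : Equiv.Perm (Fin p)) (n : ℕ) : ℝ :=
  if h : n < p then F (Sset σ (n + 1)) - F (Sset σ n) else 0

lemma sum_c (h0 : F ∅ = 0) (σ : Equiv.Perm (Fin p)) (n : ℕ) :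
    ∑ i ∈ Finset.range n, c F σ i = F (Sset σ n) := by
  induction n with
  | zero => simp [Sset_zero, h0]
  | succ n ih =>
    rw [Finset.sum_range_succ, ih, c]
    by_cases h : n < p
    · rw [dif_pos h]; ring
    · rw [dif_neg h, Sset_succ_eq_of_ge σ h, add_zero]

/-- Abel-summation style inequality. -/
lemma abel_le (a b : ℕ → ℝ) (hmono : ∀ n, a (n + 1) ≤ a n)
    (hB : ∀ n, ∑ i ∈ Finset.range n, b i ≤ 0) (n : ℕ) :
    ∑ i ∈ Finset.range n, a i * b i ≤ a n * ∑ i ∈ Finset.range n, b i := by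
  induction n with
  | zero => simp
  | succ n ih =>
    rw [Finset.sum_range_succ, Finset.sum_range_succ]
    have h1 : ∑ i ∈ Finset.range n, a i * b i + a n * b n
        ≤ a n * (∑ i ∈ Finset.range n, b i + b n) := by
      rw [mul_add]; linarith
    refine h1.trans ?_
    have := mul_le_mul_of_nonpos_right (hmono n)
      (by simpa [Finset.sum_range_succ] using hB (n + 1))
    linarith [this]

/-- The linear functional associated to a permutation. -/
noncomputable def ell (σ : Equiv.Perm (Fin p)) (x : Fin p → ℝ) : ℝ :=
  ∑ i : Fin p, x (σ i) * (F ((Finset.Iic i).image σ) - F ((Finset.Iio i).image σ))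

lemma ell_eq_sum_w (σ : Equiv.Perm (Fin p)) (x : Fin p → ℝ) :
    ell F σ x = ∑ j : Fin p, x j * w F σ j := by
  rw [ell, ← Equiv.sum_comp σ (fun j => x j * w F σ j)]
  refine Finset.sum_congr rfl fun i _ => ?_
  rw [w_apply, image_Iic, image_Iio]

/-- ℕ-indexed version of `x ∘ τ`. -/
noncomputable def aseq (x : Fin p → ℝ) (τ : Equiv.Perm (Fin p)) (n : ℕ) : ℝ :=
  if h : n < p then x (τ ⟨n, h⟩) else 0

noncomputable def wseq (σ τ : Equiv.Perm (Fin p)) (n : ℕ) : ℝ :=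
  if h : n < p then w F σ (τ ⟨n, h⟩) else 0

lemma sum_wseq (σ τ : Equiv.Perm (Fin p)) (n : ℕ) :
    ∑ i ∈ Finset.range n, wseq F σ τ i = ∑ j ∈ Sset τ n, w F σ j := by
  induction n with
  | zero => simp [Sset_zero]
  | succ n ih =>
    rw [Finset.sum_range_succ, ih, wseq]
    by_cases h : n < p
    · rw [dif_pos h, Sset_succ τ h, sum_insert (not_mem_Sset_self τ h)]; ring
    · rw [dif_neg h, Sset_succ_eq_of_ge τ h, add_zero]

lemma ell_eq_range (σ : Equiv.Perm (Fin p)) (x : Fin p → ℝ) :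
    ell F σ x = ∑ n ∈ Finset.range p, aseq x σ n * c F σ n := by
  rw [ell, ← Fin.sum_univ_eq_sum_range (fun n => aseq x σ n * c F σ n) p]
  refine Finset.sum_congr rfl fun i _ => ?_
  rw [aseq, c, dif_pos i.2, dif_pos i.2, Fin.eta, image_Iic, image_Iio]

lemma sum_w_eq_range (σ τ : Equiv.Perm (Fin p)) (x : Fin p → ℝ) :
    ∑ j : Fin p, x j * w F σ j = ∑ n ∈ Finset.range p, aseq x τ n * wseq F σ τ n := by
  rw [← Equiv.sum_comp τ (fun j => x j * w F σ j),
    ← Fin.sum_univ_eq_sum_range (fun n => aseq x τ n * wseq F σ τ n) p]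
  refine Finset.sum_congr rfl fun i _ => ?_
  rw [aseq, wseq, dif_pos i.2, dif_pos i.2, Fin.eta]

/-- The greedy inequality: every permutation's linear functional is dominated by the
sorted one's, for nonnegative `x`. -/
lemma ell_le_ell (hsub : ∀ A B : Finset (Fin p), F (A ∩ B) + F (A ∪ B) ≤ F A + F B)
    (h0 : F ∅ = 0) (σ τ : Equiv.Perm (Fin p)) (x : Fin p → ℝ)
    (hx0 : ∀ j, 0 ≤ x j) (hτ : ∀ i j : Fin p, i ≤ j → x (τ j) ≤ x (τ i)) :
    ell F σ x ≤ ell F τ x := by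
  rw [ell_eq_sum_w, sum_w_eq_range F σ τ x, ell_eq_range]
  -- difference sequence
  set b : ℕ → ℝ := fun n => wseq F σ τ n - c F τ n with hb
  have hBle : ∀ n, ∑ i ∈ Finset.range n, b i ≤ 0 := by
    intro n
    rw [hb]
    rw [Finset.sum_sub_distrib, sum_wseq, sum_c F h0]
    linarith [sum_w_le F hsub h0 σ (Sset τ n)]
  have hmono : ∀ n, aseq x τ (n + 1) ≤ aseq x τ n := by
    intro n
    unfold aseq
    by_cases h1 : n + 1 < p
    · rw [dif_pos h1, dif_pos (Nat.lt_of_succ_lt h1)]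
      exact hτ ⟨n, Nat.lt_of_succ_lt h1⟩ ⟨n + 1, h1⟩ (by simp [Fin.le_def])
    · rw [dif_neg h1]
      by_cases h2 : n < p
      · rw [dif_pos h2]; exact hx0 _
      · rw [dif_neg h2]
  have habel := abel_le (aseq x τ) b hmono hBle p
  have hap : aseq x τ p = 0 := dif_neg (lt_irrefl p)
  rw [hap, zero_mul] at habel
  have hsplit : ∑ n ∈ Finset.range p, aseq x τ n * wseq F σ τ n
      = ∑ n ∈ Finset.range p, aseq x τ n * b n
        + ∑ n ∈ Finset.range p, aseq x τ n * c F τ n := by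
    rw [← Finset.sum_add_distrib]
    refine Finset.sum_congr rfl fun n _ => ?_
    rw [hb]; ring
  rw [hsplit]
  linarith [habel]

lemma lovasz_eq_ell (x : Fin p → ℝ) :
    lovasz F x = ell F (Tuple.sort (fun j => -x j)) x := rfl

lemma sortperm_antitone (x : Fin p → ℝ) (i j : Fin p) (h : i ≤ j) :
    x (Tuple.sort (fun j => -x j) j) ≤ x (Tuple.sort (fun j => -x j) i) := by
  have := Tuple.monotone_sort (fun j => -x j) h
  simpa using this

/-- The max of the linear functionals over all permutations. -/
noncomputable def gmax (x : Fin p → ℝ) : ℝ :=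
  (Finset.univ : Finset (Equiv.Perm (Fin p))).sup' Finset.univ_nonempty
    (fun σ => ell F σ x)

lemma ell_le_gmax (σ : Equiv.Perm (Fin p)) (x : Fin p → ℝ) :
    ell F σ x ≤ gmax F x :=
  Finset.le_sup' (fun σ => ell F σ x) (mem_univ σ)

/-- On nonnegative vectors, the Lovász extension is the max of the linear functionals. -/
lemma lovasz_eq_sup (hsub : ∀ A B : Finset (Fin p), F (A ∩ B) + F (A ∪ B) ≤ F A + F B)
    (h0 : F ∅ = 0) (x : Fin p → ℝ) (hx0 : ∀ j, 0 ≤ x j) :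
    lovasz F x = gmax F x := by
  apply le_antisymm
  · rw [lovasz_eq_ell]
    exact ell_le_gmax F _ x
  · refine Finset.sup'_le _ _ fun σ _ => ?_
    rw [lovasz_eq_ell]
    exact ell_le_ell F hsub h0 σ _ x hx0 (sortperm_antitone x)

lemma ell_combo (σ : Equiv.Perm (Fin p)) (x y : Fin p → ℝ) (a b : ℝ) :
    ell F σ (a • x + b • y) = a * ell F σ x + b * ell F σ y := by
  simp only [ell, Pi.add_apply, Pi.smul_apply, smul_eq_mul, Finset.mul_sum,
    ← Finset.sum_add_distrib]
  exact Finset.sum_congr rfl fun i _ => by ring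

end LovaszAux


open LovaszAux in
/-- The Lovász extension of a submodular function (with `F ∅ = 0`) is convex on `[0,1]^p`. -/
theorem lovasz_convex {p : ℕ} (F : Finset (Fin p) → ℝ)
    (hsub : ∀ A B : Finset (Fin p), F (A ∩ B) + F (A ∪ B) ≤ F A + F B)
    (h0 : F ∅ = 0) :
    ConvexOn ℝ (Set.Icc (0 : Fin p → ℝ) 1) (lovasz F) := by
  have hconv : Convex ℝ (Set.Icc (0 : Fin p → ℝ) 1) := convex_Icc 0 1
  refine ⟨hconv, fun x hx y hy a b ha hb hab => ?_⟩
  have hx0 : ∀ j, 0 ≤ x j := fun j => hx.1 j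
  have hy0 : ∀ j, 0 ≤ y j := fun j => hy.1 j
  have hz : a • x + b • y ∈ Set.Icc (0 : Fin p → ℝ) 1 := hconv hx hy ha hb hab
  have hz0 : ∀ j, 0 ≤ (a • x + b • y) j := fun j => hz.1 j
  rw [lovasz_eq_sup F hsub h0 x hx0, lovasz_eq_sup F hsub h0 y hy0,
    lovasz_eq_sup F hsub h0 _ hz0]
  show gmax F (a • x + b • y) ≤ a • gmax F x + b • gmax F y
  refine Finset.sup'_le _ _ fun σ _ => ?_
  rw [ell_combo]
  have h1 := ell_le_gmax F σ x
  have h2 := ell_le_gmax F σ y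
  have := add_le_add (mul_le_mul_of_nonneg_left h1 ha) (mul_le_mul_of_nonneg_left h2 hb)
  simpa [smul_eq_mul] using this
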